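/- Let H be a complex Hilbert space and T₀, T₁, Y ∈ B(H). Assume: (i) the only operator A ∈ B(H) with T₀A = AT₁ is A = 0; (ii) every W ∈ B(H) commuting with both T₀ and T₀* is a scalar multiple of the identity; (iii) every W ∈ B(H) commuting with both T₁ and T₁* is a scalar multiple of the identity. Let T := [[T₀, T₁−T₀],[0,T₁]] and T̃ := [[T₁, YT₀−T₁Y],[0,T₀]] act on H ⊕ H. Then there exists a unitary U on H ⊕ H with UT = T̃U if and only if there exists a complex number c with |c| = 1 such that YT₀ − T₁Y = c·(T₀ − T₁). -/

import Mathlib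

open ContinuousLinearMap

noncomputable def blockOp {H₀ H₁ K₀ K₁ : Type*}
    [NormedAddCommGroup H₀] [InnerProductSpace ℂ H₀]
    [NormedAddCommGroup H₁] [InnerProductSpace ℂ H₁]
    [NormedAddCommGroup K₀] [InnerProductSpace ℂ K₀]
    [NormedAddCommGroup K₁] [InnerProductSpace ℂ K₁]
    (A : H₀ →L[ℂ] K₀) (B : H₁ →L[ℂ] K₀) (C : H₀ →L[ℂ] K₁) (D : H₁ →L[ℂ] K₁) :
    WithLp 2 (H₀ × H₁) →L[ℂ] WithLp 2 (K₀ × K₁) :=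
  (((WithLp.prodContinuousLinearEquiv 2 ℂ K₀ K₁).symm : (K₀ × K₁) →L[ℂ] WithLp 2 (K₀ × K₁)) ∘L
    ((A.coprod B).prod (C.coprod D))) ∘L
    ((WithLp.prodContinuousLinearEquiv 2 ℂ H₀ H₁ : WithLp 2 (H₀ × H₁) →L[ℂ] (H₀ × H₁)))

section Helpers

variable {H : Type*} [NormedAddCommGroup H] [InnerProductSpace ℂ H]

set_option linter.unnecessarySeqFocus false

private lemma blockOp_comp (A B C D A' B' C' D' : H →L[ℂ] H) :
    blockOp A B C D ∘L blockOp A' B' C' D' =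
    blockOp (A ∘L A' + B ∘L C') (A ∘L B' + B ∘L D')
      (C ∘L A' + D ∘L C') (C ∘L B' + D ∘L D') := by
  ext x
  simp [blockOp]

private lemma blockOp_one : blockOp (1 : H →L[ℂ] H) (0 : H →L[ℂ] H) (0 : H →L[ℂ] H)
    (1 : H →L[ℂ] H) = (1 : WithLp 2 (H × H) →L[ℂ] WithLp 2 (H × H)) := by
  ext x <;> simp [blockOp] <;> rfl

private lemma blockOp_adjoint [CompleteSpace H] (A B C D : H →L[ℂ] H) :
    adjoint (blockOp A B C D) = blockOp (adjoint A) (adjoint C) (adjoint B) (adjoint D) := by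
  symm
  rw [eq_adjoint_iff]
  intro x y
  simp [blockOp, WithLp.prod_inner_apply, inner_add_left, inner_add_right, adjoint_inner_left]
  ring

private lemma blockOp_inj {A B C D A' B' C' D' : H →L[ℂ] H}
    (h : blockOp A B C D = blockOp A' B' C' D') :
    A = A' ∧ B = B' ∧ C = C' ∧ D = D' := by
  have key : ∀ (x y : H), (A x + B y = A' x + B' y) ∧ (C x + D y = C' x + D' y) := by
    intro x y
    have h' := congrArg (fun M : WithLp 2 (H × H) →L[ℂ] WithLp 2 (H × H) =>
      (WithLp.prodContinuousLinearEquiv 2 ℂ H H)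
        (M ((WithLp.prodContinuousLinearEquiv 2 ℂ H H).symm (x, y)))) h
    simpa [blockOp, Prod.ext_iff] using h'
  refine ⟨?_, ?_, ?_, ?_⟩ <;> ext z
  · simpa using (key z 0).1
  · simpa using (key 0 z).1
  · simpa using (key z 0).2
  · simpa using (key 0 z).2

private lemma exists_blockOp (U : WithLp 2 (H × H) →L[ℂ] WithLp 2 (H × H)) :
    ∃ A B C D : H →L[ℂ] H, U = blockOp A B C D := by
  set e := WithLp.prodContinuousLinearEquiv 2 ℂ H H with he
  refine ⟨(ContinuousLinearMap.fst ℂ H H) ∘L (e : _ →L[ℂ] _) ∘L U ∘L (e.symm : _ →L[ℂ] _) ∘L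
      (ContinuousLinearMap.inl ℂ H H),
    (ContinuousLinearMap.fst ℂ H H) ∘L (e : _ →L[ℂ] _) ∘L U ∘L (e.symm : _ →L[ℂ] _) ∘L
      (ContinuousLinearMap.inr ℂ H H),
    (ContinuousLinearMap.snd ℂ H H) ∘L (e : _ →L[ℂ] _) ∘L U ∘L (e.symm : _ →L[ℂ] _) ∘L
      (ContinuousLinearMap.inl ℂ H H),
    (ContinuousLinearMap.snd ℂ H H) ∘L (e : _ →L[ℂ] _) ∘L U ∘L (e.symm : _ →L[ℂ] _) ∘L
      (ContinuousLinearMap.inr ℂ H H), ?_⟩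
  ext x
  have hx : x = (e.symm : (H × H) →L[ℂ] WithLp 2 (H × H)) (x.fst, 0)
      + (e.symm : (H × H) →L[ℂ] WithLp 2 (H × H)) (0, x.snd) := by
    apply e.injective
    simp [he, Prod.ext_iff]
  conv_lhs => rw [hx, map_add]
  simp [blockOp, he, Prod.ext_iff]
  rfl

private lemma smul_one_comp (c : ℂ) (X : H →L[ℂ] H) :
    (c • (1 : H →L[ℂ] H)) ∘L X = c • X := by
  simp [smul_comp, one_def]

private lemma comp_smul_one (c : ℂ) (X : H →L[ℂ] H) :
    X ∘L (c • (1 : H →L[ℂ] H)) = c • X := by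
  simp [comp_smul, one_def]

private lemma adjoint_smul_one [CompleteSpace H] (c : ℂ) :
    adjoint (c • (1 : H →L[ℂ] H)) = (starRingEnd ℂ c) • 1 := by
  symm; rw [eq_adjoint_iff]; intro x y
  simp [inner_smul_left, inner_smul_right, one_def]

private lemma blockOp_congr {A B C D A' B' C' D' : H →L[ℂ] H} (g1 : A = A') (g2 : B = B')
    (g3 : C = C') (g4 : D = D') : blockOp A B C D = blockOp A' B' C' D' := by
  rw [g1, g2, g3, g4]

private lemma adjoint_neg' [CompleteSpace H] (X : H →L[ℂ] H) : adjoint (-X) = -(adjoint X) :=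
  map_neg (adjoint : (H →L[ℂ] H) ≃ₗᵢ⋆[ℂ] (H →L[ℂ] H)) X

end Helpers

set_option maxHeartbeats 2000000 in
/-- with `T = [[T₀, T₁-T₀],[0,T₁]]` and `T̃ = [[T₁, YT₀-T₁Y],[0,T₀]]`,
assuming `ker σ_{T₀,T₁} = 0` and `{T_i, T_i*}' = ℂ·1`, a unitary `U` with `UT = T̃U`
exists iff `YT₀ - T₁Y = c(T₀ - T₁)` for some unimodular `c`. -/
theorem stmt6 {H : Type*}
    [NormedAddCommGroup H] [InnerProductSpace ℂ H] [CompleteSpace H]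
    (T₀ T₁ Y : H →L[ℂ] H)
    (h1 : ∀ A : H →L[ℂ] H, T₀ ∘L A = A ∘L T₁ → A = 0)
    (h2 : ∀ W : H →L[ℂ] H, W ∘L T₀ = T₀ ∘L W → W ∘L adjoint T₀ = adjoint T₀ ∘L W →
      ∃ c : ℂ, W = c • 1)
    (h3 : ∀ W : H →L[ℂ] H, W ∘L T₁ = T₁ ∘L W → W ∘L adjoint T₁ = adjoint T₁ ∘L W →
      ∃ c : ℂ, W = c • 1) :
    (∃ U : WithLp 2 (H × H) →L[ℂ] WithLp 2 (H × H),
      adjoint U ∘L U = 1 ∧ U ∘L adjoint U = 1 ∧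
      U ∘L blockOp T₀ (T₁ - T₀) 0 T₁ = blockOp T₁ (Y ∘L T₀ - T₁ ∘L Y) 0 T₀ ∘L U) ↔
    (∃ c : ℂ, ‖c‖ = 1 ∧ Y ∘L T₀ - T₁ ∘L Y = c • (T₀ - T₁)) := by
  set S : H →L[ℂ] H := Y ∘L T₀ - T₁ ∘L Y with hSdef
  constructor
  · rintro ⟨U, hu1, hu2, hUT⟩
    by_cases hss : Subsingleton H
    · haveI : Subsingleton (H →L[ℂ] H) :=
        ⟨fun f g => ContinuousLinearMap.ext fun x => Subsingleton.elim _ _⟩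
      exact ⟨1, by simp, Subsingleton.elim _ _⟩
    obtain ⟨A, B, C, D, rfl⟩ := exists_blockOp U
    -- reversed intertwining with the adjoint of U
    have hrev : adjoint (blockOp A B C D) ∘L blockOp T₁ S 0 T₀ =
        blockOp T₀ (T₁ - T₀) 0 T₁ ∘L adjoint (blockOp A B C D) := by
      ext x
      have hx2 : blockOp A B C D (adjoint (blockOp A B C D) x) = x := by
        simpa using ContinuousLinearMap.ext_iff.mp hu2 x
      have hh := ContinuousLinearMap.ext_iff.mp hUT (adjoint (blockOp A B C D) x)
      simp only [ContinuousLinearMap.comp_apply] at hh ⊢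
      rw [hx2] at hh
      rw [← hh]
      simpa using ContinuousLinearMap.ext_iff.mp hu1
        (blockOp T₀ (T₁ - T₀) 0 T₁ (adjoint (blockOp A B C D) x))
    have hk : blockOp A B C D ∘L adjoint (blockOp T₀ (T₁ - T₀) 0 T₁) =
        adjoint (blockOp T₁ S 0 T₀) ∘L blockOp A B C D := by
      have h := congrArg adjoint hrev
      rw [adjoint_comp, adjoint_comp, adjoint_adjoint] at h
      exact h.symm
    have hadj0 : adjoint (0 : H →L[ℂ] H) = 0 := by simp
    have hadjΔ : adjoint (T₁ - T₀) = adjoint T₁ - adjoint T₀ := by simp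
    rw [blockOp_adjoint, blockOp_adjoint, hadj0, hadjΔ, blockOp_comp, blockOp_comp] at hk
    obtain ⟨k1, k2, k3, k4⟩ := blockOp_inj hk
    simp only [comp_zero, zero_comp, add_zero, zero_add] at k1 k2 k3 k4
    rw [blockOp_adjoint, blockOp_comp, ← blockOp_one] at hu1
    obtain ⟨u1, u2, u3, u4⟩ := blockOp_inj hu1
    rw [blockOp_adjoint, blockOp_comp, ← blockOp_one] at hu2
    obtain ⟨v1, v2, v3, v4⟩ := blockOp_inj hu2
    rw [blockOp_comp, blockOp_comp] at hUT
    obtain ⟨e1, e2, e3, e4⟩ := blockOp_inj hUT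
    simp only [comp_zero, zero_comp, add_zero, zero_add] at e1 e2 e3 e4
    -- D = -C
    have hCD : C + D = 0 := h1 _ (by rw [comp_add, add_comp, ← e3, ← e4, comp_sub]; abel)
    have hD : D = -C := eq_neg_of_add_eq_zero_right hCD
    subst hD
    -- A = B
    have hQ : (A - B) ∘L adjoint T₀ = adjoint T₁ ∘L (A - B) := by
      rw [sub_comp, comp_sub, ← k1, ← k2, comp_sub]
      abel
    have hQ0 : A - B = 0 := by
      have h := congrArg adjoint hQ
      rw [adjoint_comp, adjoint_comp, adjoint_adjoint, adjoint_adjoint] at h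
      have h0 := h1 _ h
      calc A - B = adjoint (adjoint (A - B)) := (adjoint_adjoint _).symm
        _ = adjoint 0 := by rw [h0]
        _ = 0 := by simp
    have hAB : A = B := sub_eq_zero.mp hQ0
    subst hAB
    -- C commutes with adjoint T₀
    have hC0star : C ∘L adjoint T₀ = adjoint T₀ ∘L C := by
      have h2c : (C ∘L adjoint T₀ + (-C) ∘L (adjoint T₁ - adjoint T₀)) - ((-C) ∘L adjoint T₁)
          = (adjoint S ∘L A + adjoint T₀ ∘L C) - (adjoint S ∘L A + adjoint T₀ ∘L (-C)) := by
        rw [k3, k4]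
      have h2c' : (2 : ℂ) • (C ∘L adjoint T₀) = (2 : ℂ) • (adjoint T₀ ∘L C) := by
        simp only [neg_comp, comp_neg, comp_sub] at h2c
        rw [← sub_eq_zero] at h2c ⊢
        rw [two_smul, two_smul]
        abel_nf at h2c ⊢
        convert h2c using 2
      exact smul_right_injective _ two_ne_zero h2c'
    obtain ⟨c₀, hc₀⟩ := h2 C e3 hC0star
    -- A commutes with T₁ and adjoint T₁
    have hA1 : A ∘L T₁ = T₁ ∘L A := by
      have hsum : (A ∘L T₀) + (A ∘L (T₁ - T₀) + A ∘L T₁)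
          = (T₁ ∘L A + S ∘L C) + (T₁ ∘L A + S ∘L (-C)) := by rw [e1, e2]
      have h2' : (2 : ℂ) • (A ∘L T₁) = (2 : ℂ) • (T₁ ∘L A) := by
        simp only [comp_sub, comp_neg] at hsum
        rw [← sub_eq_zero] at hsum ⊢
        rw [two_smul, two_smul]
        abel_nf at hsum ⊢
        convert hsum using 2
      exact smul_right_injective _ two_ne_zero h2'
    obtain ⟨a, ha⟩ := h3 A hA1 k2
    -- pass to scalars
    haveI : Nontrivial H := not_subsingleton_iff_nontrivial.mp hss
    obtain ⟨x0, hx0⟩ := exists_ne (0 : H)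
    have smul_one_inj : ∀ r s : ℂ, r • (1 : H →L[ℂ] H) = s • (1 : H →L[ℂ] H) → r = s := by
      intro r s hrs
      have hx : r • x0 = s • x0 := by simpa using ContinuousLinearMap.ext_iff.mp hrs x0
      exact smul_left_injective ℂ hx0 hx
    have hv4 : c₀ * starRingEnd ℂ c₀ + c₀ * starRingEnd ℂ c₀ = 1 := by
      have h := v4
      rw [hc₀] at h
      simp only [adjoint_neg', adjoint_smul_one, neg_comp, comp_neg, smul_one_comp,
        comp_smul_one, smul_smul, neg_neg, smul_neg, neg_smul, ← add_smul] at h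
      have h' := smul_one_inj _ 1 (h.trans (one_smul ℂ (1 : H →L[ℂ] H)).symm)
      linear_combination h'
    have hu1' : a * starRingEnd ℂ a + c₀ * starRingEnd ℂ c₀ = 1 := by
      have h := u1
      rw [hc₀, ha] at h
      simp only [adjoint_smul_one, smul_one_comp, comp_smul_one, smul_smul, ← add_smul] at h
      have h' := smul_one_inj _ 1 (h.trans (one_smul ℂ (1 : H →L[ℂ] H)).symm)
      linear_combination h'
    have hnsc : Complex.normSq c₀ = 1 / 2 := by
      have h := hv4
      rw [Complex.mul_conj] at h
      have h2' : ((Complex.normSq c₀ + Complex.normSq c₀ : ℝ) : ℂ) = ((1 : ℝ) : ℂ) := by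
        push_cast; exact h
      have := Complex.ofReal_injective h2'
      linarith
    have hnsa : Complex.normSq a = 1 / 2 := by
      have h := hu1'
      rw [Complex.mul_conj, Complex.mul_conj] at h
      have h2' : ((Complex.normSq a + Complex.normSq c₀ : ℝ) : ℂ) = ((1 : ℝ) : ℂ) := by
        push_cast; exact h
      have := Complex.ofReal_injective h2'
      linarith
    have hc₀ne : c₀ ≠ 0 := by
      intro h0
      rw [h0] at hnsc
      norm_num at hnsc
    have hnorm : ‖a‖ = ‖c₀‖ := by
      have g1 : ‖a‖ ^ 2 = Complex.normSq a := by
        rw [← Complex.sq_norm]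
      have g2 : ‖c₀‖ ^ 2 = Complex.normSq c₀ := by
        rw [← Complex.sq_norm]
      nlinarith [norm_nonneg a, norm_nonneg c₀]
    refine ⟨a * c₀⁻¹, ?_, ?_⟩
    · rw [norm_mul, norm_inv, hnorm]
      exact mul_inv_cancel₀ (norm_ne_zero_iff.mpr hc₀ne)
    · have h := e1
      rw [ha, hc₀] at h
      simp only [smul_one_comp, comp_smul_one] at h
      -- h : a • T₀ = a • T₁ + c₀ • S
      have he1 : c₀ • S = a • (T₀ - T₁) := by
        rw [smul_sub a T₀ T₁, h]
        abel
      have h2' := congrArg (fun X : H →L[ℂ] H => c₀⁻¹ • X) he1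
      simp only [smul_smul, inv_mul_cancel₀ hc₀ne, one_smul] at h2'
      rw [h2', mul_comm]
  · rintro ⟨c, hc, hS⟩
    set r : ℂ := ((Real.sqrt 2 : ℝ) : ℂ)⁻¹ with hr
    have hrr : r * r = (2 : ℂ)⁻¹ := by
      rw [hr, ← mul_inv, ← Complex.ofReal_mul, Real.mul_self_sqrt (by norm_num)]
      norm_num
    have hrconj : starRingEnd ℂ r = r := by
      rw [hr, map_inv₀, Complex.conj_ofReal]
    have hcconj : starRingEnd ℂ c * c = 1 := by
      rw [mul_comm, Complex.mul_conj]
      norm_cast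
      rw [Complex.normSq_eq_norm_sq, hc]
      norm_num
    have key : starRingEnd ℂ (c * r) * (c * r) = 2⁻¹ := by
      rw [map_mul, hrconj]
      linear_combination (r * r) * hcconj + hrr
    have keyr : starRingEnd ℂ r * r = 2⁻¹ := by rw [hrconj]; exact hrr
    refine ⟨blockOp ((c * r) • 1) ((c * r) • 1) (r • 1) (-(r • 1)), ?_, ?_, ?_⟩
    · rw [blockOp_adjoint, adjoint_neg', adjoint_smul_one, adjoint_smul_one, blockOp_comp,
        ← blockOp_one]
      apply blockOp_congr <;>
        simp only [neg_comp, comp_neg, smul_neg, neg_neg, smul_one_comp, comp_smul_one,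
          smul_smul, map_mul, hrconj]
      case g1 => match_scalars; linear_combination (r * r) * hcconj + 2 * hrr
      case g2 => match_scalars; linear_combination (r * r) * hcconj
      case g3 => match_scalars; linear_combination (r * r) * hcconj
      case g4 => match_scalars; linear_combination (r * r) * hcconj + 2 * hrr
    · rw [blockOp_adjoint, adjoint_neg', adjoint_smul_one, adjoint_smul_one, blockOp_comp,
        ← blockOp_one]
      apply blockOp_congr <;>
        simp only [neg_comp, comp_neg, smul_neg, neg_neg, smul_one_comp, comp_smul_one,
          smul_smul, map_mul, hrconj]
      case g1 => match_scalars; linear_combination (2 * r * r) * hcconj + 2 * hrr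
      case g2 => match_scalars; linear_combination (0 : ℂ)
      case g3 => match_scalars; linear_combination (0 : ℂ)
      case g4 => match_scalars; linear_combination 2 * hrr
    · rw [hS, blockOp_comp, blockOp_comp]
      apply blockOp_congr <;>
        simp only [smul_one_comp, comp_smul_one, zero_comp, comp_zero, add_zero, zero_add,
          neg_comp, comp_neg, smul_neg, neg_neg, smul_smul] <;>
        module
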